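/- Let p be an isotropic distribution on ℝ^d (i.e., the conditional distribution of x given ‖x‖ = r is uniform on the sphere of radius r) with radial distribution p_R, and let K be a kernel of the form K(x, x') = ‖x‖‖x'‖·k(⟨x,x'⟩/(‖x‖‖x'‖)). If φ is an eigenfunction of the integral operator T_K^{p₁} with respect to the uniform measure p₁ on the unit sphere with eigenvalue λ, then x ↦ φ(x/‖x‖)·‖x‖ (suitably extended) is an eigenfunction of T_K^p with eigenvalue λ·E_{R∼p_R}[R²] — in particular the nonzero eigenvalues of T_K^p are those of T_K^{p₁} scaled by E[R²]. -/

import Mathlib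

open MeasureTheory

/-- Eigenfunctions of the integral operator of a homogeneous dot-product kernel over an
isotropic measure are obtained from those over the unit sphere, with eigenvalues scaled
by `E[R²]`. -/
theorem stmt_17 {d : ℕ}
    (K : EuclideanSpace ℝ (Fin d) → EuclideanSpace ℝ (Fin d) → ℝ) (k : ℝ → ℝ)
    (hK : ∀ x x' : EuclideanSpace ℝ (Fin d), x ≠ 0 → x' ≠ 0 →
      K x x' = ‖x‖ * ‖x'‖ * k ((inner ℝ x x' : ℝ) / (‖x‖ * ‖x'‖)))
    (p₁ : Measure (EuclideanSpace ℝ (Fin d))) [IsProbabilityMeasure p₁]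
    (hp₁ : ∀ᵐ z ∂p₁, ‖z‖ = 1)
    (pR : Measure ℝ) [IsProbabilityMeasure pR]
    (hpR : ∀ᵐ r ∂pR, 0 < r)
    (p : Measure (EuclideanSpace ℝ (Fin d)))
    (hp : p = Measure.map (fun ru : ℝ × EuclideanSpace ℝ (Fin d) => ru.1 • ru.2)
      (pR.prod p₁))
    (φ : EuclideanSpace ℝ (Fin d) → ℝ) (lam : ℝ)
    (heig : ∀ x : EuclideanSpace ℝ (Fin d), ‖x‖ = 1 →
      ∫ z, K x z * φ z ∂p₁ = lam * φ x)
    (ψ : EuclideanSpace ℝ (Fin d) → ℝ)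
    (hψ : ∀ x : EuclideanSpace ℝ (Fin d), x ≠ 0 → ψ x = φ (‖x‖⁻¹ • x) * ‖x‖)
    (hmom : 0 < ∫ r, r ^ 2 ∂pR) :
    ∀ x : EuclideanSpace ℝ (Fin d), x ≠ 0 →
      ∫ z, K x z * ψ z ∂p = (lam * ∫ r, r ^ 2 ∂pR) * ψ x := by
  intro x hx
  have hxn : ‖x‖ ≠ 0 := norm_ne_zero_iff.mpr hx
  set xh : EuclideanSpace ℝ (Fin d) := ‖x‖⁻¹ • x with hxh
  have hxh1 : ‖xh‖ = 1 := by
    rw [hxh, norm_smul, norm_inv, norm_norm, inv_mul_cancel₀ hxn]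
  have hxh0 : xh ≠ 0 := by
    intro h; rw [h] at hxh1; simp at hxh1
  set h : EuclideanSpace ℝ (Fin d) → ℝ := fun u => k ((inner ℝ xh u : ℝ)) * φ u with hh
  have hint_h : ∫ u, h u ∂p₁ = lam * φ xh := by
    rw [← heig xh hxh1]
    refine integral_congr_ae ?_
    filter_upwards [hp₁] with u hu
    have hu0 : u ≠ 0 := by intro h0; rw [h0] at hu; simp at hu
    rw [hK xh u hxh0 hu0, hxh1, hu]
    ring_nf
    rfl
  set T : ℝ × EuclideanSpace ℝ (Fin d) → EuclideanSpace ℝ (Fin d) :=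
    fun ru => ru.1 • ru.2 with hT
  have hTm : Measurable T := measurable_fst.smul measurable_snd
  set μ : Measure (ℝ × EuclideanSpace ℝ (Fin d)) := pR.prod p₁ with hμ
  have haer : ∀ᵐ ru ∂μ, 0 < ru.1 := by
    apply ae_of_ae_map (f := Prod.fst) (p := fun r : ℝ => 0 < r)
      measurable_fst.aemeasurable
    rw [hμ, Measure.map_fst_prod]
    simpa using hpR
  have haeu : ∀ᵐ ru : ℝ × EuclideanSpace ℝ (Fin d) ∂μ, ‖ru.2‖ = 1 := by
    apply ae_of_ae_map (f := Prod.snd)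
      (p := fun u : EuclideanSpace ℝ (Fin d) => ‖u‖ = 1) measurable_snd.aemeasurable
    rw [hμ, Measure.map_snd_prod]
    simpa using hp₁
  have key : ∀ᵐ ru ∂μ, K x (T ru) * ψ (T ru) = (‖x‖ * ru.1 ^ 2) * h ru.2 := by
    filter_upwards [haer, haeu] with ru hr hu
    have hu0 : ru.2 ≠ 0 := by intro h0; rw [h0] at hu; simp at hu
    have hr0 : ru.1 ≠ 0 := ne_of_gt hr
    have hz0 : T ru ≠ 0 := smul_ne_zero hr0 hu0
    have hzn : ‖T ru‖ = ru.1 := by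
      simp only [hT, norm_smul, hu, Real.norm_eq_abs, abs_of_pos hr, mul_one]
    have hzh : ‖T ru‖⁻¹ • T ru = ru.2 := by
      rw [hzn]; simp only [hT, smul_smul, inv_mul_cancel₀ hr0, one_smul]
    have hin : (inner ℝ x (T ru) : ℝ) / (‖x‖ * ‖T ru‖) = (inner ℝ xh ru.2 : ℝ) := by
      rw [hzn]
      simp only [hT, real_inner_smul_right, hxh, real_inner_smul_left]
      field_simp
    rw [hK x _ hx hz0, hψ _ hz0, hzh, hin, hzn, hh]
    ring
  have hψx : ψ x = φ xh * ‖x‖ := hψ x hx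
  by_cases hint : Integrable h p₁
  · have hr2 : Integrable (fun r : ℝ => r ^ 2) pR := by
      by_contra hc
      rw [integral_undef hc] at hmom
      exact lt_irrefl 0 hmom
    obtain ⟨ht, htm, hth⟩ := hint.1
    set F : EuclideanSpace ℝ (Fin d) → ℝ :=
      fun z => ‖x‖ * ‖z‖ ^ 2 * ht (‖z‖⁻¹ • z) with hF
    have hradm : Measurable fun z : EuclideanSpace ℝ (Fin d) => ‖z‖⁻¹ • z :=
      (measurable_norm.inv).smul measurable_id
    have hFm : Measurable F :=
      (measurable_const.mul (measurable_norm.pow_const 2)).mul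
        (htm.measurable.comp hradm)
    obtain ⟨N, hNs, hNm, hN0⟩ := exists_measurable_superset_of_null (ae_iff.mp hth)
    have hfF : (fun z => K x z * ψ z) =ᵐ[p] F := by
      rw [hp]
      have hS : MeasurableSet
          ({(0 : EuclideanSpace ℝ (Fin d))} ∪
            (fun z : EuclideanSpace ℝ (Fin d) => ‖z‖⁻¹ • z) ⁻¹' N) :=
        (measurableSet_singleton 0).union (hradm hNm)
      have hS0 : Measure.map T μ
          ({(0 : EuclideanSpace ℝ (Fin d))} ∪
            (fun z : EuclideanSpace ℝ (Fin d) => ‖z‖⁻¹ • z) ⁻¹' N) = 0 := by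
        rw [Measure.map_apply hTm hS]
        have hae : ∀ᵐ ru ∂μ, T ru ∉
            ({(0 : EuclideanSpace ℝ (Fin d))} ∪
              (fun z : EuclideanSpace ℝ (Fin d) => ‖z‖⁻¹ • z) ⁻¹' N) := by
          have hNae : ∀ᵐ ru : ℝ × EuclideanSpace ℝ (Fin d) ∂μ, ru.2 ∉ N := by
            apply ae_of_ae_map (f := Prod.snd)
              (p := fun u : EuclideanSpace ℝ (Fin d) => u ∉ N)
              measurable_snd.aemeasurable
            rw [hμ, Measure.map_snd_prod]
            simp only [measure_univ, one_smul]
            exact ae_iff.mpr (by simpa using hN0)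
          filter_upwards [haer, haeu, hNae] with ru hr hu hN
          have hu0 : ru.2 ≠ 0 := by intro h0; rw [h0] at hu; simp at hu
          have hr0 : ru.1 ≠ 0 := ne_of_gt hr
          have hz0 : T ru ≠ 0 := smul_ne_zero hr0 hu0
          have hzn : ‖T ru‖ = ru.1 := by
            simp only [hT, norm_smul, hu, Real.norm_eq_abs, abs_of_pos hr, mul_one]
          have hzh : ‖T ru‖⁻¹ • T ru = ru.2 := by
            rw [hzn]; simp only [hT, smul_smul, inv_mul_cancel₀ hr0, one_smul]
          simp only [Set.mem_union, Set.mem_singleton_iff, Set.mem_preimage]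
          push_neg
          exact ⟨hz0, by rw [hzh]; exact hN⟩
        have := ae_iff.mp hae
        simp only [not_not] at this
        exact this
      refine ae_iff.mpr (measure_mono_null ?_ hS0)
      intro z hz
      simp only [Set.mem_setOf_eq] at hz
      simp only [Set.mem_union, Set.mem_singleton_iff, Set.mem_preimage]
      by_contra hcon
      push_neg at hcon
      obtain ⟨hz0, hzN⟩ := hcon
      apply hz
      have hhe : h (‖z‖⁻¹ • z) = ht (‖z‖⁻¹ • z) := by
        by_contra hne
        exact hzN (hNs hne)
      have hzn0 : ‖z‖ ≠ 0 := norm_ne_zero_iff.mpr hz0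
      rw [hK x _ hx hz0, hψ _ hz0]
      have hin2 : (inner ℝ x z : ℝ) / (‖x‖ * ‖z‖)
          = (inner ℝ xh (‖z‖⁻¹ • z) : ℝ) := by
        rw [hxh, real_inner_smul_left, real_inner_smul_right]
        field_simp
      simp only [hF]
      rw [hin2, ← hhe]
      simp only [hh]
      ring
    have hFT : ∀ᵐ ru ∂μ, F (T ru) = (fun r : ℝ => ‖x‖ * r ^ 2) ru.1 * ht ru.2 := by
      filter_upwards [haer, haeu] with ru hr hu
      have hu0 : ru.2 ≠ 0 := by intro h0; rw [h0] at hu; simp at hu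
      have hr0 : ru.1 ≠ 0 := ne_of_gt hr
      have hzn : ‖T ru‖ = ru.1 := by
        simp only [hT, norm_smul, hu, Real.norm_eq_abs, abs_of_pos hr, mul_one]
      have hzh : ‖T ru‖⁻¹ • T ru = ru.2 := by
        rw [hzn]; simp only [hT, smul_smul, inv_mul_cancel₀ hr0, one_smul]
      show ‖x‖ * ‖T ru‖ ^ 2 * ht (‖T ru‖⁻¹ • T ru) = ‖x‖ * ru.1 ^ 2 * ht ru.2
      rw [hzh, hzn]
    calc ∫ z, K x z * ψ z ∂p = ∫ z, F z ∂p := integral_congr_ae hfF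
      _ = ∫ ru, F (T ru) ∂μ := by
          rw [hp]
          exact integral_map hTm.aemeasurable hFm.aestronglyMeasurable
      _ = ∫ ru : ℝ × EuclideanSpace ℝ (Fin d),
            (fun r : ℝ => ‖x‖ * r ^ 2) ru.1 * ht ru.2 ∂μ :=
          integral_congr_ae hFT
      _ = (∫ r, ‖x‖ * r ^ 2 ∂pR) * ∫ u, ht u ∂p₁ := by
          exact integral_prod_mul (fun r : ℝ => ‖x‖ * r ^ 2) ht
      _ = (lam * ∫ r, r ^ 2 ∂pR) * ψ x := by
          rw [integral_const_mul, integral_congr_ae hth.symm, hint_h, hψx]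
          ring
  · have hφ0 : lam * φ xh = 0 := by
      rw [← hint_h, integral_undef hint]
    have hLHS : ∫ z, K x z * ψ z ∂p = 0 := by
      apply integral_undef
      intro hInt
      rw [hp] at hInt
      have hcomp : Integrable (fun ru => K x (T ru) * ψ (T ru)) μ :=
        (integrable_map_measure hInt.1 hTm.aemeasurable).mp hInt
      have hg : Integrable
          (fun ru : ℝ × EuclideanSpace ℝ (Fin d) => (‖x‖ * ru.1 ^ 2) * h ru.2) μ :=
        hcomp.congr key
      rw [hμ] at hg
      have hae2 : ∀ᵐ r ∂pR, Integrable (fun u => (‖x‖ * r ^ 2) * h u) p₁ :=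
        hg.prod_right_ae
      obtain ⟨r, hri, hrp⟩ := (hae2.and hpR).exists
      have hc0 : (‖x‖ * r ^ 2) ≠ 0 :=
        mul_ne_zero hxn (pow_ne_zero 2 (ne_of_gt hrp))
      apply hint
      have hri2 := hri.const_mul (‖x‖ * r ^ 2)⁻¹
      refine hri2.congr (Filter.Eventually.of_forall fun u => ?_)
      field_simp
    rw [hLHS, hψx]
    calc (0:ℝ) = (lam * φ xh) * ((∫ r, r ^ 2 ∂pR) * ‖x‖) := by rw [hφ0]; ring
      _ = (lam * ∫ r, r ^ 2 ∂pR) * (φ xh * ‖x‖) := by ring
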